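/- Let 0 < k < 1, r > 0, ρ > 0, γ > 1 the positive root of γ² - γ - 2r/ρ² = 0, b₁ = γk/(γ+k-1), and G(π) = (1-π)(π/(1-π))^γ. Define V̂₁ as the smooth-fit candidate: V̂₁(π) = π - k for π ≥ b₁ and V̂₁(π) = ((b₁-k)/G(b₁))G(π) for π < b₁. Then for all π ∈ (0,1)\{b₁}, (ρ²π²(1-π)²/2)·V̂₁''(π) - r·V̂₁(π) ≤ 0. -/

import Mathlib

open Set

private lemma auxD (p q x : ℝ) (hx : 0 < x) (hx1 : x < 1) :
    HasDerivAt (fun y : ℝ => y ^ p * (1 - y) ^ q)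
      (p * x ^ (p - 1) * (1 - x) ^ q - q * x ^ p * (1 - x) ^ (q - 1)) x := by
  have h1 : HasDerivAt (fun y : ℝ => 1 - y) (-1) x := by
    simpa using (hasDerivAt_id x).const_sub 1
  have h2 : HasDerivAt (fun y : ℝ => (1 - y) ^ q)
      (q * (1 - x) ^ (q - 1) * -1) x :=
    (Real.hasDerivAt_rpow_const (p := q) (Or.inl (by linarith : (1:ℝ) - x ≠ 0))).comp x h1
  have h3 : HasDerivAt (fun y : ℝ => y ^ p) (p * x ^ (p - 1)) x :=
    Real.hasDerivAt_rpow_const (Or.inl hx.ne')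
  have h4 : HasDerivAt (fun y : ℝ => y ^ p * (1 - y) ^ q)
      (p * x ^ (p - 1) * (1 - x) ^ q + x ^ p * (q * (1 - x) ^ (q - 1) * -1)) x := h3.mul h2
  convert h4 using 1
  ring

theorem stmt_10 (k r ρ γ : ℝ) (hk0 : 0 < k) (hk1 : k < 1) (hr : 0 < r) (hρ : 0 < ρ)
    (hγpos : 0 < γ) (hγ : γ ^ 2 - γ - 2 * r / ρ ^ 2 = 0)
    (G : ℝ → ℝ) (hG : ∀ π ∈ Ioo (0:ℝ) 1, G π = (1 - π) * (π / (1 - π)) ^ γ)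
    (b₁ : ℝ) (hb : b₁ = γ * k / (γ + k - 1))
    (V : ℝ → ℝ)
    (hV : ∀ π : ℝ, V π = if b₁ ≤ π then π - k else ((b₁ - k) / G b₁) * G π) :
    ∀ π ∈ Ioo (0:ℝ) 1, π ≠ b₁ →
      ρ ^ 2 * π ^ 2 * (1 - π) ^ 2 / 2 * deriv (deriv V) π - r * V π ≤ 0 := by
  intro π hπ hne
  obtain ⟨hπ0, hπ1⟩ := hπ
  have h1π : 0 < 1 - π := by linarith
  have h2r : 0 < 2 * r / ρ ^ 2 := by positivity
  have hγ1 : 1 < γ := by nlinarith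
  have hd : 0 < γ + k - 1 := by linarith
  have hkb : k < b₁ := by
    rw [hb, lt_div_iff₀ hd]
    nlinarith [mul_pos hk0 (by linarith : 0 < 1 - k)]
  have hrr : r = ρ ^ 2 * (γ ^ 2 - γ) / 2 := by
    have h2 : γ ^ 2 - γ = 2 * r / ρ ^ 2 := by linarith
    rw [h2]
    field_simp
  rcases hne.lt_or_gt with hlt | hgt
  · -- π < b₁
    set c := (b₁ - k) / G b₁ with hc
    have hUopen : IsOpen (Ioo (0:ℝ) 1 ∩ Iio b₁) := isOpen_Ioo.inter isOpen_Iio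
    have hUmem : (Ioo (0:ℝ) 1 ∩ Iio b₁) ∈ nhds π := hUopen.mem_nhds ⟨⟨hπ0, hπ1⟩, hlt⟩
    have hVg : ∀ x ∈ Ioo (0:ℝ) 1 ∩ Iio b₁,
        V x = c * (x ^ γ * (1 - x) ^ (1 - γ)) := by
      rintro x ⟨⟨hx0, hx1⟩, hxb⟩
      have h1x : 0 < 1 - x := by linarith
      rw [hV x, if_neg (not_le.mpr hxb), hG x ⟨hx0, hx1⟩,
        Real.div_rpow hx0.le h1x.le,
        show (1 - x) ^ (1 - γ) = (1 - x) / (1 - x) ^ γ by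
          rw [Real.rpow_sub h1x, Real.rpow_one]]
      ring
    have hg' : ∀ x ∈ Ioo (0:ℝ) 1, HasDerivAt (fun y : ℝ => y ^ γ * (1 - y) ^ (1 - γ))
        (γ * x ^ (γ - 1) * (1 - x) ^ (1 - γ) - (1 - γ) * x ^ γ * (1 - x) ^ (1 - γ - 1)) x :=
      fun x hx => auxD γ (1 - γ) x hx.1 hx.2
    have hd1 : deriv V =ᶠ[nhds π] fun x =>
        c * (γ * (x ^ (γ - 1) * (1 - x) ^ (1 - γ)) - (1 - γ) * (x ^ γ * (1 - x) ^ (1 - γ - 1))) := by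
      refine (Filter.eventuallyEq_of_mem hUmem hVg).deriv.trans ?_
      filter_upwards [hUmem] with x hx
      rw [((hg' x hx.1).const_mul c).deriv]
      ring
    have hD1d : HasDerivAt (fun x =>
        c * (γ * (x ^ (γ - 1) * (1 - x) ^ (1 - γ)) - (1 - γ) * (x ^ γ * (1 - x) ^ (1 - γ - 1))))
        (c * (γ * ((γ - 1) * π ^ (γ - 1 - 1) * (1 - π) ^ (1 - γ)
                - (1 - γ) * π ^ (γ - 1) * (1 - π) ^ (1 - γ - 1))
            - (1 - γ) * (γ * π ^ (γ - 1) * (1 - π) ^ (1 - γ - 1)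
                - (1 - γ - 1) * π ^ γ * (1 - π) ^ (1 - γ - 1 - 1)))) π := by
      have hA := auxD (γ - 1) (1 - γ) π hπ0 hπ1
      have hB := auxD γ (1 - γ - 1) π hπ0 hπ1
      exact ((hA.const_mul γ).sub (hB.const_mul (1 - γ))).const_mul c
    have hdd : deriv (deriv V) π =
        c * (γ * ((γ - 1) * π ^ (γ - 1 - 1) * (1 - π) ^ (1 - γ)
                - (1 - γ) * π ^ (γ - 1) * (1 - π) ^ (1 - γ - 1))
            - (1 - γ) * (γ * π ^ (γ - 1) * (1 - π) ^ (1 - γ - 1)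
                - (1 - γ - 1) * π ^ γ * (1 - π) ^ (1 - γ - 1 - 1))) := by
      rw [Filter.EventuallyEq.deriv_eq hd1]
      exact hD1d.deriv
    rw [hdd, hVg π ⟨⟨hπ0, hπ1⟩, hlt⟩]
    have e1 : π ^ (γ - 1) = π ^ (γ - 1 - 1) * π := by
      rw [show γ - 1 = γ - 1 - 1 + 1 by ring, Real.rpow_add_one hπ0.ne']
      norm_num
    have e2 : π ^ γ = π ^ (γ - 1 - 1) * π * π := by
      rw [show γ = γ - 1 - 1 + 1 + 1 by ring, Real.rpow_add_one hπ0.ne',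
        Real.rpow_add_one hπ0.ne']
      norm_num
    have e3 : (1 - π) ^ (1 - γ - 1) = (1 - π) ^ (1 - γ - 1 - 1) * (1 - π) := by
      rw [show 1 - γ - 1 = 1 - γ - 1 - 1 + 1 by ring, Real.rpow_add_one h1π.ne']
      norm_num
    have e4 : (1 - π) ^ (1 - γ) = (1 - π) ^ (1 - γ - 1 - 1) * (1 - π) * (1 - π) := by
      rw [show 1 - γ = 1 - γ - 1 - 1 + 1 + 1 by ring, Real.rpow_add_one h1π.ne',
        Real.rpow_add_one h1π.ne']
      norm_num
    rw [e1, e2, e3, e4, hrr]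
    exact le_of_eq (by ring)
  · -- b₁ < π
    have hUmem : Ioi b₁ ∈ nhds π := isOpen_Ioi.mem_nhds hgt
    have hVg : ∀ x ∈ Ioi b₁, V x = x - k := fun x hx => by
      rw [hV x, if_pos (le_of_lt hx)]
    have hd1 : deriv V =ᶠ[nhds π] fun _ => (1:ℝ) := by
      refine (Filter.eventuallyEq_of_mem hUmem hVg).deriv.trans ?_
      filter_upwards with x
      simpa using ((hasDerivAt_id x).sub_const k).deriv
    have hdd : deriv (deriv V) π = 0 := by
      rw [Filter.EventuallyEq.deriv_eq hd1, deriv_const]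
    rw [hdd, hV π, if_pos (le_of_lt hgt)]
    have hkπ : k < π := lt_trans hkb hgt
    have h0 : 0 ≤ r * (π - k) := mul_nonneg hr.le (by linarith)
    rw [mul_zero, zero_sub]
    linarith
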